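/- Let r = √2 − 1 and consider the family of closed discs in ℝ² consisting of the discs of radius 1 centered at the points (2m, 2n) for m, n ∈ ℤ, together with the discs of radius r centered at the points (2m+1, 2n+1) for m, n ∈ ℤ. Then (i) these discs have pairwise disjoint interiors (the family is a packing), and (ii) its density limsup_{k→∞} area([−k,k]² ∩ union of the discs)/area([−k,k]²) equals π(2−√2)/2 ≈ 0.9201. -/

import Mathlib

open MeasureTheory Filter Metric Real

/-- The centers of the discs of the periodic compact packing `P₄`:
large discs (radius 1) at points `(2m, 2n)` and small discs (radius `√2 - 1`)
at points `(2m+1, 2n+1)`. -/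
noncomputable def P4center : (ℤ × ℤ) ⊕ (ℤ × ℤ) → EuclideanSpace ℝ (Fin 2)
  | Sum.inl (m, n) => !₂[(2 * m : ℝ), (2 * n : ℝ)]
  | Sum.inr (m, n) => !₂[(2 * m + 1 : ℝ), (2 * n + 1 : ℝ)]

/-- The radii of the discs of the packing `P₄`. -/
noncomputable def P4radius : (ℤ × ℤ) ⊕ (ℤ × ℤ) → ℝ
  | Sum.inl _ => 1
  | Sum.inr _ => Real.sqrt 2 - 1

/-- The family `P₄` of unit discs centered at `(2m, 2n)` and discs of radius `√2 - 1`
centered at `(2m+1, 2n+1)` is a packing (pairwise disjoint interiors) and its density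
is `π(2-√2)/2`. -/
-- Auxiliary definitions and lemmas
noncomputable def pt (a b : ℝ) : EuclideanSpace ℝ (Fin 2) := !₂[a, b]

@[simp] lemma pt_zero (a b : ℝ) : pt a b 0 = a := rfl
@[simp] lemma pt_one (a b : ℝ) : pt a b 1 = b := rfl

lemma dist_pt_eq (x : EuclideanSpace ℝ (Fin 2)) (a b : ℝ) :
    dist x (pt a b) = Real.sqrt ((x 0 - a) ^ 2 + (x 1 - b) ^ 2) := by
  rw [EuclideanSpace.dist_eq, Fin.sum_univ_two]
  simp [Real.dist_eq, sq_abs]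

lemma mem_closedBall_pt {x : EuclideanSpace ℝ (Fin 2)} {a b r : ℝ} (hr : 0 ≤ r) :
    x ∈ closedBall (pt a b) r ↔ (x 0 - a) ^ 2 + (x 1 - b) ^ 2 ≤ r ^ 2 := by
  rw [mem_closedBall, dist_pt_eq]
  constructor
  · intro h
    nlinarith [Real.sq_sqrt (show (0:ℝ) ≤ (x 0 - a) ^ 2 + (x 1 - b) ^ 2 by positivity),
      Real.sqrt_nonneg ((x 0 - a) ^ 2 + (x 1 - b) ^ 2)]
  · intro h
    calc Real.sqrt ((x 0 - a) ^ 2 + (x 1 - b) ^ 2) ≤ Real.sqrt (r ^ 2) := Real.sqrt_le_sqrt h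
      _ = r := Real.sqrt_sq hr

lemma coord0_le {x : EuclideanSpace ℝ (Fin 2)} {a b r : ℝ} (h : x ∈ closedBall (pt a b) r) :
    |x 0 - a| ≤ r := by
  have hr : 0 ≤ r := le_trans dist_nonneg h
  rw [mem_closedBall_pt hr] at h
  nlinarith [abs_nonneg (x 0 - a), sq_abs (x 0 - a), sq_nonneg (x 1 - b), sq_nonneg (|x 0 - a| - r)]

lemma coord1_le {x : EuclideanSpace ℝ (Fin 2)} {a b r : ℝ} (h : x ∈ closedBall (pt a b) r) :
    |x 1 - b| ≤ r := by
  have hr : 0 ≤ r := le_trans dist_nonneg h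
  rw [mem_closedBall_pt hr] at h
  nlinarith [abs_nonneg (x 1 - b), sq_abs (x 1 - b), sq_nonneg (x 0 - a), sq_nonneg (|x 1 - b| - r)]

lemma le_dist_pt {x : EuclideanSpace ℝ (Fin 2)} {a b c : ℝ} (hc : 0 ≤ c)
    (h : c ^ 2 ≤ (x 0 - a) ^ 2 + (x 1 - b) ^ 2) : c ≤ dist x (pt a b) := by
  rw [dist_pt_eq]
  exact (Real.le_sqrt hc (by positivity)).mpr h

lemma sqrt2_gt_one : (1 : ℝ) < Real.sqrt 2 := by
  nlinarith [Real.sq_sqrt (by norm_num : (0:ℝ) ≤ 2), Real.sqrt_nonneg 2]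

lemma sqrt2_lt_two : Real.sqrt 2 < 2 := by
  nlinarith [Real.sq_sqrt (by norm_num : (0:ℝ) ≤ 2), Real.sqrt_nonneg 2]

lemma P4radius_pos (i : (ℤ × ℤ) ⊕ (ℤ × ℤ)) : 0 < P4radius i := by
  cases i with
  | inl p => norm_num [P4radius]
  | inr p => simpa [P4radius, sub_pos] using sqrt2_gt_one

lemma int_sq_one {a : ℤ} (ha : a ≠ 0) : (1 : ℤ) ≤ a ^ 2 := by
  have := Int.one_le_abs ha
  nlinarith [sq_abs a]

lemma odd_sq_one (a : ℤ) : (1 : ℤ) ≤ (2 * a - 1) ^ 2 :=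
  int_sq_one (by omega)

lemma two_le_dist_even {m n m' n' : ℤ} (h : ¬(m = m' ∧ n = n')) :
    (2 : ℝ) ≤ dist (pt (2 * m) (2 * n)) (pt (2 * m') (2 * n')) := by
  apply le_dist_pt (by norm_num)
  have h1 : (1 : ℤ) ≤ (m - m') ^ 2 + (n - n') ^ 2 := by
    rcases not_and_or.mp h with hm | hn
    · nlinarith [int_sq_one (sub_ne_zero.mpr hm), sq_nonneg (n - n')]
    · nlinarith [int_sq_one (sub_ne_zero.mpr hn), sq_nonneg (m - m')]
  have h2 : (1 : ℝ) ≤ ((m : ℝ) - m') ^ 2 + ((n : ℝ) - n') ^ 2 := by exact_mod_cast h1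
  simp only [pt_zero, pt_one]
  nlinarith

lemma sqrt2_le_dist_mixed (m n m' n' : ℤ) :
    Real.sqrt 2 ≤ dist (pt (2 * m) (2 * n)) (pt (2 * m' + 1) (2 * n' + 1)) := by
  apply le_dist_pt (Real.sqrt_nonneg 2)
  rw [Real.sq_sqrt (by norm_num : (0:ℝ) ≤ 2)]
  have h1 : (1 : ℤ) ≤ (2 * (m - m') - 1) ^ 2 := odd_sq_one _
  have h2 : (1 : ℤ) ≤ (2 * (n - n') - 1) ^ 2 := odd_sq_one _
  have h1' : (1 : ℝ) ≤ (2 * ((m:ℝ) - m') - 1) ^ 2 := by exact_mod_cast h1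
  have h2' : (1 : ℝ) ≤ (2 * ((n:ℝ) - n') - 1) ^ 2 := by exact_mod_cast h2
  simp only [pt_zero, pt_one]
  nlinarith

lemma P4center_inl (m n : ℤ) : P4center (Sum.inl (m, n)) = pt (2 * m) (2 * n) := rfl
lemma P4center_inr (m n : ℤ) : P4center (Sum.inr (m, n)) = pt (2 * m + 1) (2 * n + 1) := rfl
lemma P4radius_inl (p : ℤ × ℤ) : P4radius (Sum.inl p) = 1 := rfl
lemma P4radius_inr (p : ℤ × ℤ) : P4radius (Sum.inr p) = Real.sqrt 2 - 1 := rfl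

lemma P4_dist_ge (i j : (ℤ × ℤ) ⊕ (ℤ × ℤ)) (hij : i ≠ j) :
    P4radius i + P4radius j ≤ dist (P4center i) (P4center j) := by
  cases i with
  | inl p =>
    obtain ⟨m, n⟩ := p
    cases j with
    | inl q =>
      obtain ⟨m', n'⟩ := q
      have h : ¬(m = m' ∧ n = n') := by rintro ⟨rfl, rfl⟩; exact hij rfl
      rw [P4center_inl, P4center_inl, P4radius_inl, P4radius_inl]
      linarith [two_le_dist_even h]
    | inr q =>
      obtain ⟨m', n'⟩ := q
      rw [P4center_inl, P4center_inr, P4radius_inl, P4radius_inr]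
      have := sqrt2_le_dist_mixed m n m' n'
      linarith
  | inr p =>
    obtain ⟨m, n⟩ := p
    cases j with
    | inl q =>
      obtain ⟨m', n'⟩ := q
      rw [P4center_inr, P4center_inl, P4radius_inr, P4radius_inl, dist_comm]
      have := sqrt2_le_dist_mixed m' n' m n
      linarith
    | inr q =>
      obtain ⟨m', n'⟩ := q
      have h : ¬(m = m' ∧ n = n') := by rintro ⟨rfl, rfl⟩; exact hij rfl
      rw [P4center_inr, P4center_inr, P4radius_inr, P4radius_inr]
      have h2 : (2:ℝ) ≤ dist (pt (2*m+1) (2*n+1)) (pt (2*m'+1) (2*n'+1)) := by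
        apply le_dist_pt (by norm_num)
        have h1 : (1 : ℤ) ≤ (m - m') ^ 2 + (n - n') ^ 2 := by
          rcases not_and_or.mp h with hm | hn
          · nlinarith [int_sq_one (sub_ne_zero.mpr hm), sq_nonneg (n - n')]
          · nlinarith [int_sq_one (sub_ne_zero.mpr hn), sq_nonneg (m - m')]
        have h2' : (1 : ℝ) ≤ ((m : ℝ) - m') ^ 2 + ((n : ℝ) - n') ^ 2 := by exact_mod_cast h1
        simp only [pt_zero, pt_one]
        nlinarith
      have := sqrt2_lt_two
      linarith

lemma P4_packing : Pairwise fun i j =>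
    Disjoint (interior (closedBall (P4center i) (P4radius i)))
      (interior (closedBall (P4center j) (P4radius j))) := by
  intro i j hij
  rw [interior_closedBall _ (P4radius_pos i).ne', interior_closedBall _ (P4radius_pos j).ne']
  exact ball_disjoint_ball (P4_dist_ge i j hij)



-- volume of a 2-dimensional closed ball
lemma vol_closedBall₂ (x : EuclideanSpace ℝ (Fin 2)) (r : ℝ) (hr : 0 ≤ r) :
    volume (closedBall x r) = ENNReal.ofReal (π * r ^ 2) := by
  rw [EuclideanSpace.volume_closedBall, Fintype.card_fin]
  rw [show ((2:ℕ):ℝ) / 2 + 1 = 2 by norm_num, Real.Gamma_two]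
  rw [show Real.sqrt π ^ 2 / 1 = π by rw [div_one, Real.sq_sqrt pi_nonneg]]
  rw [← ENNReal.ofReal_pow hr, ← ENNReal.ofReal_mul (by positivity)]
  ring_nf

-- coordinate addition
example (x v : EuclideanSpace ℝ (Fin 2)) (i : Fin 2) : (x + v) i = x i + v i := by
  simp

-- hyperplane has measure zero
def coordZero (i : Fin 2) : Submodule ℝ (EuclideanSpace ℝ (Fin 2)) where
  carrier := {x | x i = 0}
  add_mem' := by intro a b ha hb; simp only [Set.mem_setOf_eq] at *; simp [ha, hb]
  zero_mem' := by simp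
  smul_mem' := by intro c a ha; simp only [Set.mem_setOf_eq] at *; simp [ha]

lemma hyperplane_null (i : Fin 2) (c : ℝ) :
    volume {x : EuclideanSpace ℝ (Fin 2) | x i = c} = 0 := by
  have h0 : volume {x : EuclideanSpace ℝ (Fin 2) | x i = 0} = 0 := by
    have : {x : EuclideanSpace ℝ (Fin 2) | x i = 0} = (coordZero i : Set _) := rfl
    rw [this]
    apply Measure.addHaar_submodule
    intro h
    have h1 : (EuclideanSpace.single i (1:ℝ)) ∈ coordZero i := h ▸ Submodule.mem_top
    have h2 : (EuclideanSpace.single i (1:ℝ)) i = 0 := h1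
    simp at h2
  have key : (fun x : EuclideanSpace ℝ (Fin 2) => x + EuclideanSpace.single i c) ⁻¹'
      {x | x i = c} = {x | x i = 0} := by
    ext x
    simp [Set.mem_preimage]
  rw [← measure_preimage_add_right volume (EuclideanSpace.single i c) {x | x i = c}, key, h0]

-- cells
def cell (u v : ℝ) : Set (EuclideanSpace ℝ (Fin 2)) :=
  {x | (u ≤ x 0 ∧ x 0 < u + 2) ∧ (v ≤ x 1 ∧ x 1 < v + 2)}

lemma measurable_coord (i : Fin 2) : Measurable fun x : EuclideanSpace ℝ (Fin 2) => x i :=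
  (EuclideanSpace.proj i).continuous.measurable

lemma cell_measurable (u v : ℝ) : MeasurableSet (cell u v) := by
  have h0 : cell u v = (fun x : EuclideanSpace ℝ (Fin 2) => x 0) ⁻¹' (Set.Ico u (u+2)) ∩
      (fun x : EuclideanSpace ℝ (Fin 2) => x 1) ⁻¹' (Set.Ico v (v+2)) := rfl
  rw [h0]
  exact ((measurable_coord 0) measurableSet_Ico).inter ((measurable_coord 1) measurableSet_Ico)

-- translation
lemma vol_inter_preimage_add (A B : Set (EuclideanSpace ℝ (Fin 2))) (v : EuclideanSpace ℝ (Fin 2)) :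
    volume ((fun x => x + v) ⁻¹' A ∩ (fun x => x + v) ⁻¹' B) = volume (A ∩ B) := by
  rw [← Set.preimage_inter, measure_preimage_add_right]
-- Stage 3: periodicity and translation lemmas
def P4S : Set (EuclideanSpace ℝ (Fin 2)) := ⋃ i, closedBall (P4center i) (P4radius i)

lemma P4S_meas : MeasurableSet P4S :=
  MeasurableSet.iUnion fun _ => measurableSet_closedBall

lemma add_pt_apply0 (x : EuclideanSpace ℝ (Fin 2)) (s t : ℝ) : (x + pt s t) 0 = x 0 + s := by simp
lemma add_pt_apply1 (x : EuclideanSpace ℝ (Fin 2)) (s t : ℝ) : (x + pt s t) 1 = x 1 + t := by simp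

lemma dist_add_pt (x : EuclideanSpace ℝ (Fin 2)) (s t α β : ℝ) :
    dist (x + pt s t) (pt α β) = dist x (pt (α - s) (β - t)) := by
  rw [dist_pt_eq, dist_pt_eq, add_pt_apply0, add_pt_apply1,
    show x 0 + s - α = x 0 - (α - s) by ring, show x 1 + t - β = x 1 - (β - t) by ring]

lemma preimage_add_cb (s t α β r : ℝ) :
    (fun x : EuclideanSpace ℝ (Fin 2) => x + pt s t) ⁻¹' closedBall (pt α β) r
      = closedBall (pt (α - s) (β - t)) r := by
  ext x
  simp only [Set.mem_preimage, mem_closedBall, dist_add_pt]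

lemma preimage_add_cell (s t u w : ℝ) :
    (fun x : EuclideanSpace ℝ (Fin 2) => x + pt s t) ⁻¹' cell u w = cell (u - s) (w - t) := by
  ext x
  simp only [Set.mem_preimage, cell, Set.mem_setOf_eq, add_pt_apply0, add_pt_apply1]
  constructor <;> rintro ⟨⟨h1, h2⟩, h3, h4⟩ <;>
    exact ⟨⟨by linarith, by linarith⟩, by linarith, by linarith⟩

lemma mem_cb_pt_shift {x : EuclideanSpace ℝ (Fin 2)} {α β r s t : ℝ} :
    x + pt s t ∈ closedBall (pt α β) r ↔ x ∈ closedBall (pt (α - s) (β - t)) r := by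
  simp only [mem_closedBall, dist_add_pt]

lemma S_shift (a b : ℤ) :
    (fun x : EuclideanSpace ℝ (Fin 2) => x + pt (2*(a:ℝ)) (2*(b:ℝ))) ⁻¹' P4S = P4S := by
  ext x
  simp only [P4S, Set.mem_preimage, Set.mem_iUnion]
  constructor
  · rintro ⟨i, hi⟩
    rcases i with ⟨m, n⟩ | ⟨m, n⟩
    · refine ⟨Sum.inl (m - a, n - b), ?_⟩
      rw [P4center_inl] at hi ⊢
      rw [show (2*((m-a:ℤ):ℝ)) = 2*(m:ℝ) - 2*(a:ℝ) by push_cast; ring,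
        show (2*((n-b:ℤ):ℝ)) = 2*(n:ℝ) - 2*(b:ℝ) by push_cast; ring]
      exact mem_cb_pt_shift.mp hi
    · refine ⟨Sum.inr (m - a, n - b), ?_⟩
      rw [P4center_inr] at hi ⊢
      rw [show (2*((m-a:ℤ):ℝ)+1) = (2*(m:ℝ)+1) - 2*(a:ℝ) by push_cast; ring,
        show (2*((n-b:ℤ):ℝ)+1) = (2*(n:ℝ)+1) - 2*(b:ℝ) by push_cast; ring]
      exact mem_cb_pt_shift.mp hi
  · rintro ⟨i, hi⟩
    rcases i with ⟨m, n⟩ | ⟨m, n⟩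
    · refine ⟨Sum.inl (m + a, n + b), ?_⟩
      rw [P4center_inl] at hi ⊢
      rw [mem_cb_pt_shift,
        show (2*((m+a:ℤ):ℝ)) - 2*(a:ℝ) = 2*(m:ℝ) by push_cast; ring,
        show (2*((n+b:ℤ):ℝ)) - 2*(b:ℝ) = 2*(n:ℝ) by push_cast; ring]
      exact hi
    · refine ⟨Sum.inr (m + a, n + b), ?_⟩
      rw [P4center_inr] at hi ⊢
      rw [mem_cb_pt_shift,
        show (2*((m+a:ℤ):ℝ)+1) - 2*(a:ℝ) = 2*(m:ℝ)+1 by push_cast; ring,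
        show (2*((n+b:ℤ):ℝ)+1) - 2*(b:ℝ) = 2*(n:ℝ)+1 by push_cast; ring]
      exact hi

lemma vol_cell_shift (u w : ℝ) (a b : ℤ) :
    volume (cell (u + 2*(a:ℝ)) (w + 2*(b:ℝ)) ∩ P4S) = volume (cell u w ∩ P4S) := by
  have h := measure_preimage_add_right volume (pt (2*(a:ℝ)) (2*(b:ℝ)))
    (cell (u + 2*(a:ℝ)) (w + 2*(b:ℝ)) ∩ P4S)
  rw [Set.preimage_inter, preimage_add_cell, S_shift,
    show u + 2*(a:ℝ) - 2*(a:ℝ) = u by ring, show w + 2*(b:ℝ) - 2*(b:ℝ) = w by ring] at h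
  exact h.symm

lemma vol_cb_cell_shift (α β r u w s t : ℝ) :
    volume (closedBall (pt (α + s) (β + t)) r ∩ cell u w)
      = volume (closedBall (pt α β) r ∩ cell (u - s) (w - t)) := by
  have h := measure_preimage_add_right volume (pt s t)
    (closedBall (pt (α + s) (β + t)) r ∩ cell u w)
  rw [Set.preimage_inter, preimage_add_cb, preimage_add_cell,
    show α + s - s = α by ring, show β + t - t = β by ring] at h
  exact h.symm

lemma cb_inter_cb_null {i j : (ℤ × ℤ) ⊕ (ℤ × ℤ)} (hij : i ≠ j) :
    volume (closedBall (P4center i) (P4radius i) ∩ closedBall (P4center j) (P4radius j)) = 0 := by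
  apply measure_mono_null _ (Measure.addHaar_sphere volume (P4center i) (P4radius i))
  rintro x ⟨h1, h2⟩
  rw [mem_closedBall] at h1 h2
  have hd := P4_dist_ge i j hij
  have ht := dist_triangle (P4center i) x (P4center j)
  rw [mem_sphere]
  rw [dist_comm (P4center i) x] at ht
  linarith

lemma vol_inter_of_cover {B C N : Set (EuclideanSpace ℝ (Fin 2))} (h : B ⊆ C ∪ N)
    (hN : volume N = 0) : volume (B ∩ C) = volume B := by
  refine le_antisymm (measure_mono Set.inter_subset_left) ?_
  calc volume B ≤ volume ((B ∩ C) ∪ N) := by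
        apply measure_mono
        intro x hx
        rcases h hx with hc | hn
        · exact Or.inl ⟨hx, hc⟩
        · exact Or.inr hn
    _ ≤ volume (B ∩ C) + volume N := measure_union_le _ _
    _ = volume (B ∩ C) := by rw [hN, add_zero]

lemma vol_cb_cell_null_h {α β r u w : ℝ} (hr : 0 ≤ r) (h : α + r ≤ u) :
    volume (closedBall (pt α β) r ∩ cell u w) = 0 := by
  apply measure_mono_null _ (Measure.addHaar_sphere volume (pt α β) r)
  rintro x ⟨hb, hc⟩
  have hb' := (mem_closedBall_pt hr).mp hb
  have hu : u ≤ x 0 := hc.1.1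
  have h1 : r ^ 2 ≤ (x 0 - α) ^ 2 := by nlinarith
  have h2 : (x 0 - α) ^ 2 + (x 1 - β) ^ 2 = r ^ 2 := by nlinarith [sq_nonneg (x 1 - β)]
  rw [mem_sphere, dist_pt_eq, h2, Real.sqrt_sq hr]

lemma vol_cb_cell_null_v {α β r u w : ℝ} (hr : 0 ≤ r) (h : β + r ≤ w) :
    volume (closedBall (pt α β) r ∩ cell u w) = 0 := by
  apply measure_mono_null _ (Measure.addHaar_sphere volume (pt α β) r)
  rintro x ⟨hb, hc⟩
  have hb' := (mem_closedBall_pt hr).mp hb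
  have hw : w ≤ x 1 := hc.2.1
  have h1 : r ^ 2 ≤ (x 1 - β) ^ 2 := by nlinarith
  have h2 : (x 0 - α) ^ 2 + (x 1 - β) ^ 2 = r ^ 2 := by nlinarith [sq_nonneg (x 0 - α)]
  rw [mem_sphere, dist_pt_eq, h2, Real.sqrt_sq hr]

lemma cell_disjoint_h {u w u' w' : ℝ} (h : u + 2 ≤ u') : Disjoint (cell u w) (cell u' w') := by
  rw [Set.disjoint_left]
  rintro x ⟨⟨_, h2⟩, _⟩ ⟨⟨h3, _⟩, _⟩
  linarith

lemma cell_disjoint_v {u w u' w' : ℝ} (h : w + 2 ≤ w') : Disjoint (cell u w) (cell u' w') := by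
  rw [Set.disjoint_left]
  rintro x ⟨_, _, h2⟩ ⟨_, h3, _⟩
  linarith

lemma vol_cb_four_cells {α β r u w : ℝ} (hr : 0 ≤ r)
    (hsub : closedBall (pt α β) r ⊆ cell u w ∪ cell (u+2) w ∪ cell u (w+2) ∪ cell (u+2) (w+2)) :
    volume (closedBall (pt α β) r ∩ cell u w)
      + volume (closedBall (pt α β) r ∩ cell (u+2) w)
      + volume (closedBall (pt α β) r ∩ cell u (w+2))
      + volume (closedBall (pt α β) r ∩ cell (u+2) (w+2))
      = ENNReal.ofReal (π * r ^ 2) := by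
  set B := closedBall (pt α β) r with hB
  have m1 : MeasurableSet (B ∩ cell u w) := measurableSet_closedBall.inter (cell_measurable _ _)
  have m2 : MeasurableSet (B ∩ cell (u+2) w) :=
    measurableSet_closedBall.inter (cell_measurable _ _)
  have m3 : MeasurableSet (B ∩ cell u (w+2)) :=
    measurableSet_closedBall.inter (cell_measurable _ _)
  have m4 : MeasurableSet (B ∩ cell (u+2) (w+2)) :=
    measurableSet_closedBall.inter (cell_measurable _ _)
  have d12 : Disjoint (B ∩ cell u w) (B ∩ cell (u+2) w) :=
    (cell_disjoint_h (by linarith)).mono Set.inter_subset_right Set.inter_subset_right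
  have d13 : Disjoint (B ∩ cell u w) (B ∩ cell u (w+2)) :=
    (cell_disjoint_v (by linarith)).mono Set.inter_subset_right Set.inter_subset_right
  have d23 : Disjoint (B ∩ cell (u+2) w) (B ∩ cell u (w+2)) :=
    (cell_disjoint_v (by linarith)).mono Set.inter_subset_right Set.inter_subset_right
  have d14 : Disjoint (B ∩ cell u w) (B ∩ cell (u+2) (w+2)) :=
    (cell_disjoint_h (by linarith)).mono Set.inter_subset_right Set.inter_subset_right
  have d24 : Disjoint (B ∩ cell (u+2) w) (B ∩ cell (u+2) (w+2)) :=
    (cell_disjoint_v (by linarith)).mono Set.inter_subset_right Set.inter_subset_right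
  have d34 : Disjoint (B ∩ cell u (w+2)) (B ∩ cell (u+2) (w+2)) :=
    (cell_disjoint_h (by linarith)).mono Set.inter_subset_right Set.inter_subset_right
  rw [← measure_union d12 m2]
  rw [← measure_union (Disjoint.union_left d13 d23) m3]
  rw [← measure_union (Disjoint.union_left (Disjoint.union_left d14 d24) d34) m4]
  have hU : B ∩ cell u w ∪ B ∩ cell (u+2) w ∪ B ∩ cell u (w+2) ∪ B ∩ cell (u+2) (w+2) = B := by
    rw [← Set.inter_union_distrib_left, ← Set.inter_union_distrib_left,
      ← Set.inter_union_distrib_left]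
    exact Set.inter_eq_left.mpr hsub
  rw [hU, hB, vol_closedBall₂ _ _ hr]
-- Stage 4: per-cell volume computations
lemma r_nonneg : (0:ℝ) ≤ Real.sqrt 2 - 1 := by linarith [sqrt2_gt_one]
lemma r_lt_one : Real.sqrt 2 - 1 < 1 := by linarith [sqrt2_lt_two]

lemma pi4_eq : π + π * (Real.sqrt 2 - 1) ^ 2 = π * (4 - 2 * Real.sqrt 2) := by
  have h2 : Real.sqrt 2 ^ 2 = 2 := Real.sq_sqrt (by norm_num)
  nlinarith [pi_pos]

def F0 : Finset ((ℤ × ℤ) ⊕ (ℤ × ℤ)) :=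
  {Sum.inl (0,0), Sum.inl (1,0), Sum.inl (0,1), Sum.inl (1,1), Sum.inr (0,0)}

lemma cell00_eq : cell 0 0 ∩ P4S
    = ⋃ i ∈ F0, (closedBall (P4center i) (P4radius i) ∩ cell 0 0) := by
  ext x
  simp only [Set.mem_inter_iff, P4S, Set.mem_iUnion, exists_prop]
  constructor
  · rintro ⟨hc, i, hb⟩
    refine ⟨i, ?_, hb, hc⟩
    obtain ⟨⟨c1, c2⟩, c3, c4⟩ := hc
    rcases i with ⟨m, n⟩ | ⟨m, n⟩
    · rw [P4center_inl] at hb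
      have h0 := abs_le.mp (coord0_le hb)
      have h1 := abs_le.mp (coord1_le hb)
      rw [P4radius_inl] at h0 h1
      have hm : m = 0 ∨ m = 1 := by
        have a1 : (-1:ℤ) ≤ 2*m := by exact_mod_cast (by linarith : (-1:ℝ) ≤ 2*(m:ℝ))
        have a2 : (2*m:ℤ) < 3 := by exact_mod_cast (by linarith : (2*(m:ℝ)) < 3)
        omega
      have hn : n = 0 ∨ n = 1 := by
        have a1 : (-1:ℤ) ≤ 2*n := by exact_mod_cast (by linarith : (-1:ℝ) ≤ 2*(n:ℝ))
        have a2 : (2*n:ℤ) < 3 := by exact_mod_cast (by linarith : (2*(n:ℝ)) < 3)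
        omega
      rcases hm with rfl | rfl <;> rcases hn with rfl | rfl <;> simp [F0]
    · rw [P4center_inr] at hb
      have h0 := abs_le.mp (coord0_le hb)
      have h1 := abs_le.mp (coord1_le hb)
      rw [P4radius_inr] at h0 h1
      have hs2 := sqrt2_lt_two
      have hm : m = 0 := by
        have a1 : (-1:ℤ) < 2*m+1 := by exact_mod_cast (by linarith : (-1:ℝ) < 2*(m:ℝ)+1)
        have a2 : (2*m+1:ℤ) < 3 := by exact_mod_cast (by linarith : (2*(m:ℝ)+1) < 3)
        omega
      have hn : n = 0 := by
        have a1 : (-1:ℤ) < 2*n+1 := by exact_mod_cast (by linarith : (-1:ℝ) < 2*(n:ℝ)+1)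
        have a2 : (2*n+1:ℤ) < 3 := by exact_mod_cast (by linarith : (2*(n:ℝ)+1) < 3)
        omega
      subst hm; subst hn; simp [F0]
  · rintro ⟨i, _, hb, hc⟩
    exact ⟨hc, i, hb⟩

lemma pairwise_F_aedisjoint (F : Finset ((ℤ × ℤ) ⊕ (ℤ × ℤ))) (C : Set (EuclideanSpace ℝ (Fin 2))) :
    Set.Pairwise ↑F (Function.onFun (MeasureTheory.AEDisjoint volume)
      fun i => closedBall (P4center i) (P4radius i) ∩ C) := by
  intro i _ j _ hij
  exact measure_mono_null
    (Set.inter_subset_inter Set.inter_subset_left Set.inter_subset_left)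
    (cb_inter_cb_null hij)

lemma cb_cell_nullmeas (i : (ℤ × ℤ) ⊕ (ℤ × ℤ)) (u w : ℝ) :
    NullMeasurableSet (closedBall (P4center i) (P4radius i) ∩ cell u w) volume :=
  (measurableSet_closedBall.inter (cell_measurable _ _)).nullMeasurableSet

lemma cell00_vol : volume (cell 0 0 ∩ P4S) = ENNReal.ofReal (π * (4 - 2 * Real.sqrt 2)) := by
  rw [cell00_eq, measure_biUnion_finset₀ (pairwise_F_aedisjoint F0 (cell 0 0))
    (fun i _ => cb_cell_nullmeas i 0 0)]
  rw [show F0 = insert (Sum.inl (0,0)) {Sum.inl (1,0), Sum.inl (0,1), Sum.inl (1,1),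
    Sum.inr (0,0)} from rfl]
  rw [Finset.sum_insert (by decide), Finset.sum_insert (by decide),
    Finset.sum_insert (by decide), Finset.sum_insert (by decide), Finset.sum_singleton]
  have c00 : P4center (Sum.inl ((0:ℤ),(0:ℤ))) = pt 0 0 := by rw [P4center_inl]; norm_num
  have c10 : P4center (Sum.inl ((1:ℤ),(0:ℤ))) = pt 2 0 := by rw [P4center_inl]; norm_num
  have c01 : P4center (Sum.inl ((0:ℤ),(1:ℤ))) = pt 0 2 := by rw [P4center_inl]; norm_num
  have c11 : P4center (Sum.inl ((1:ℤ),(1:ℤ))) = pt 2 2 := by rw [P4center_inl]; norm_num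
  have s00 : P4center (Sum.inr ((0:ℤ),(0:ℤ))) = pt 1 1 := by rw [P4center_inr]; norm_num
  rw [c00, c10, c01, c11, s00, P4radius_inl, P4radius_inl, P4radius_inl, P4radius_inl,
    P4radius_inr]
  -- small disc is entirely inside the cell
  have hsmall : volume (closedBall (pt 1 1) (Real.sqrt 2 - 1) ∩ cell 0 0)
      = ENNReal.ofReal (π * (Real.sqrt 2 - 1) ^ 2) := by
    rw [Set.inter_eq_left.mpr, vol_closedBall₂ _ _ r_nonneg]
    intro x hx
    have h0 := abs_le.mp (coord0_le hx)
    have h1 := abs_le.mp (coord1_le hx)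
    have := sqrt2_lt_two
    exact ⟨⟨by linarith, by linarith⟩, by linarith, by linarith⟩
  -- shift the three non-base large discs
  have h10 : volume (closedBall (pt 2 0) 1 ∩ cell 0 0)
      = volume (closedBall (pt 0 0) 1 ∩ cell (-2) 0) := by
    have := vol_cb_cell_shift 0 0 1 0 0 2 0
    norm_num at this
    exact this
  have h01 : volume (closedBall (pt 0 2) 1 ∩ cell 0 0)
      = volume (closedBall (pt 0 0) 1 ∩ cell 0 (-2)) := by
    have := vol_cb_cell_shift 0 0 1 0 0 0 2
    norm_num at this
    exact this
  have h11 : volume (closedBall (pt 2 2) 1 ∩ cell 0 0)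
      = volume (closedBall (pt 0 0) 1 ∩ cell (-2) (-2)) := by
    have := vol_cb_cell_shift 0 0 1 0 0 2 2
    norm_num at this
    exact this
  rw [hsmall, h10, h01, h11]
  -- the four quarter discs add up to a full disc
  have hfour := vol_cb_four_cells (α := 0) (β := 0) (r := 1) (u := -2) (w := -2)
    (by norm_num) ?_
  · norm_num at hfour
    calc volume (closedBall (pt 0 0) 1 ∩ cell 0 0)
          + (volume (closedBall (pt 0 0) 1 ∩ cell (-2) 0)
          + (volume (closedBall (pt 0 0) 1 ∩ cell 0 (-2))
          + (volume (closedBall (pt 0 0) 1 ∩ cell (-2) (-2))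
          + ENNReal.ofReal (π * (Real.sqrt 2 - 1) ^ 2))))
        = (volume (closedBall (pt 0 0) 1 ∩ cell (-2) (-2))
          + volume (closedBall (pt 0 0) 1 ∩ cell 0 (-2))
          + volume (closedBall (pt 0 0) 1 ∩ cell (-2) 0)
          + volume (closedBall (pt 0 0) 1 ∩ cell 0 0))
          + ENNReal.ofReal (π * (Real.sqrt 2 - 1) ^ 2) := by ring
      _ = ENNReal.ofReal π + ENNReal.ofReal (π * (Real.sqrt 2 - 1) ^ 2) := by
          rw [hfour]
      _ = ENNReal.ofReal (π * (4 - 2 * Real.sqrt 2)) := by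
          rw [← ENNReal.ofReal_add (by positivity) (by positivity), pi4_eq]
  · intro x hx
    have h0 := abs_le.mp (coord0_le hx)
    have h1 := abs_le.mp (coord1_le hx)
    simp only [sub_zero] at h0 h1
    simp only [Set.mem_union, cell, Set.mem_setOf_eq]
    norm_num
    rcases lt_or_ge (x 0) 0 with hx0 | hx0 <;> rcases lt_or_ge (x 1) 0 with hx1 | hx1
    · exact Or.inl (Or.inl (Or.inl ⟨⟨by linarith, by linarith⟩, by linarith, by linarith⟩))
    · exact Or.inl (Or.inr ⟨⟨by linarith, by linarith⟩, by linarith, by linarith⟩)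
    · exact Or.inl (Or.inl (Or.inr ⟨⟨by linarith, by linarith⟩, by linarith, by linarith⟩))
    · exact Or.inr ⟨⟨by linarith, by linarith⟩, by linarith, by linarith⟩
-- Stage 5: odd cell
def F1 : Finset ((ℤ × ℤ) ⊕ (ℤ × ℤ)) :=
  {Sum.inl (0,0), Sum.inl (-1,0), Sum.inl (0,-1), Sum.inl (-1,-1),
   Sum.inr (0,0), Sum.inr (-1,0), Sum.inr (0,-1), Sum.inr (-1,-1)}

lemma cellm1_eq : cell (-1) (-1) ∩ P4S
    = ⋃ i ∈ F1, (closedBall (P4center i) (P4radius i) ∩ cell (-1) (-1)) := by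
  ext x
  simp only [Set.mem_inter_iff, P4S, Set.mem_iUnion, exists_prop]
  constructor
  · rintro ⟨hc, i, hb⟩
    refine ⟨i, ?_, hb, hc⟩
    obtain ⟨⟨c1, c2⟩, c3, c4⟩ := hc
    rcases i with ⟨m, n⟩ | ⟨m, n⟩
    · rw [P4center_inl] at hb
      have h0 := abs_le.mp (coord0_le hb)
      have h1 := abs_le.mp (coord1_le hb)
      rw [P4radius_inl] at h0 h1
      have hm : m = -1 ∨ m = 0 := by
        have a1 : (-2:ℤ) ≤ 2*m := by exact_mod_cast (by linarith : (-2:ℝ) ≤ 2*(m:ℝ))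
        have a2 : (2*m:ℤ) < 2 := by exact_mod_cast (by linarith : (2*(m:ℝ)) < 2)
        omega
      have hn : n = -1 ∨ n = 0 := by
        have a1 : (-2:ℤ) ≤ 2*n := by exact_mod_cast (by linarith : (-2:ℝ) ≤ 2*(n:ℝ))
        have a2 : (2*n:ℤ) < 2 := by exact_mod_cast (by linarith : (2*(n:ℝ)) < 2)
        omega
      rcases hm with rfl | rfl <;> rcases hn with rfl | rfl <;> simp [F1]
    · rw [P4center_inr] at hb
      have h0 := abs_le.mp (coord0_le hb)
      have h1 := abs_le.mp (coord1_le hb)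
      rw [P4radius_inr] at h0 h1
      have hs2 := sqrt2_lt_two
      have hm : m = -1 ∨ m = 0 := by
        have a1 : (-2:ℤ) < 2*m+1 := by exact_mod_cast (by linarith : (-2:ℝ) < 2*(m:ℝ)+1)
        have a2 : (2*m+1:ℤ) < 2 := by exact_mod_cast (by linarith : (2*(m:ℝ)+1) < 2)
        omega
      have hn : n = -1 ∨ n = 0 := by
        have a1 : (-2:ℤ) < 2*n+1 := by exact_mod_cast (by linarith : (-2:ℝ) < 2*(n:ℝ)+1)
        have a2 : (2*n+1:ℤ) < 2 := by exact_mod_cast (by linarith : (2*(n:ℝ)+1) < 2)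
        omega
      rcases hm with rfl | rfl <;> rcases hn with rfl | rfl <;> simp [F1]
  · rintro ⟨i, _, hb, hc⟩
    exact ⟨hc, i, hb⟩

lemma cellm1_vol : volume (cell (-1) (-1) ∩ P4S) = ENNReal.ofReal (π * (4 - 2 * Real.sqrt 2)) := by
  rw [cellm1_eq, measure_biUnion_finset₀ (pairwise_F_aedisjoint F1 (cell (-1) (-1)))
    (fun i _ => cb_cell_nullmeas i (-1) (-1))]
  rw [show F1 = insert (Sum.inl (0,0)) (insert (Sum.inl (-1,0)) (insert (Sum.inl (0,-1))
    (insert (Sum.inl (-1,-1)) (insert (Sum.inr (0,0)) (insert (Sum.inr (-1,0))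
    (insert (Sum.inr (0,-1)) {Sum.inr (-1,-1)})))))) from rfl]
  rw [Finset.sum_insert (by decide), Finset.sum_insert (by decide),
    Finset.sum_insert (by decide), Finset.sum_insert (by decide),
    Finset.sum_insert (by decide), Finset.sum_insert (by decide),
    Finset.sum_insert (by decide), Finset.sum_singleton]
  have c00 : P4center (Sum.inl ((0:ℤ),(0:ℤ))) = pt 0 0 := by rw [P4center_inl]; norm_num
  have cm10 : P4center (Sum.inl ((-1:ℤ),(0:ℤ))) = pt (-2) 0 := by rw [P4center_inl]; norm_num
  have c0m1 : P4center (Sum.inl ((0:ℤ),(-1:ℤ))) = pt 0 (-2) := by rw [P4center_inl]; norm_num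
  have cm1m1 : P4center (Sum.inl ((-1:ℤ),(-1:ℤ))) = pt (-2) (-2) := by
    rw [P4center_inl]; norm_num
  have s00 : P4center (Sum.inr ((0:ℤ),(0:ℤ))) = pt 1 1 := by rw [P4center_inr]; norm_num
  have sm10 : P4center (Sum.inr ((-1:ℤ),(0:ℤ))) = pt (-1) 1 := by rw [P4center_inr]; norm_num
  have s0m1 : P4center (Sum.inr ((0:ℤ),(-1:ℤ))) = pt 1 (-1) := by rw [P4center_inr]; norm_num
  have sm1m1 : P4center (Sum.inr ((-1:ℤ),(-1:ℤ))) = pt (-1) (-1) := by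
    rw [P4center_inr]; norm_num
  rw [c00, cm10, c0m1, cm1m1, s00, sm10, s0m1, sm1m1, P4radius_inl, P4radius_inl,
    P4radius_inl, P4radius_inl, P4radius_inr, P4radius_inr, P4radius_inr, P4radius_inr]
  -- the three touching large discs contribute zero
  rw [vol_cb_cell_null_h (by norm_num : (0:ℝ) ≤ 1) (by norm_num : (-2:ℝ) + 1 ≤ -1)]
  rw [vol_cb_cell_null_v (by norm_num : (0:ℝ) ≤ 1) (by norm_num : (-2:ℝ) + 1 ≤ -1)]
  rw [vol_cb_cell_null_h (by norm_num : (0:ℝ) ≤ 1) (by norm_num : (-2:ℝ) + 1 ≤ -1)]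
  -- the full large disc
  have hfull : volume (closedBall (pt 0 0) 1 ∩ cell (-1) (-1)) = ENNReal.ofReal π := by
    have hcov : closedBall (pt 0 0) 1 ⊆ cell (-1) (-1) ∪ sphere (pt 0 0) 1 := by
      intro x hx
      have h0 := abs_le.mp (coord0_le hx)
      have h1 := abs_le.mp (coord1_le hx)
      simp only [sub_zero] at h0 h1
      have hb := (mem_closedBall_pt (by norm_num : (0:ℝ) ≤ 1)).mp hx
      norm_num at hb
      by_cases hc : x ∈ cell (-1) (-1)
      · exact Or.inl hc
      · right
        have hor : 1 ≤ x 0 ∨ 1 ≤ x 1 := by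
          by_contra hcon
          push_neg at hcon
          exact hc ⟨⟨by linarith [h0.1], by linarith [hcon.1]⟩,
            ⟨by linarith [h1.1], by linarith [hcon.2]⟩⟩
        have hge : 1 ≤ (x 0 - 0) ^ 2 + (x 1 - 0) ^ 2 := by
          rcases hor with h | h
          · nlinarith
          · nlinarith
        have heq : (x 0 - 0) ^ 2 + (x 1 - 0) ^ 2 = 1 := le_antisymm (by nlinarith) hge
        rw [mem_sphere, dist_pt_eq, heq, Real.sqrt_one]
    rw [vol_inter_of_cover hcov (Measure.addHaar_sphere volume _ _),
      vol_closedBall₂ _ _ (by norm_num)]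
    norm_num
  rw [hfull]
  -- shift the three non-base small discs
  have hq2 : volume (closedBall (pt (-1) 1) (Real.sqrt 2 - 1) ∩ cell (-1) (-1))
      = volume (closedBall (pt 1 1) (Real.sqrt 2 - 1) ∩ cell 1 (-1)) := by
    have := vol_cb_cell_shift 1 1 (Real.sqrt 2 - 1) (-1) (-1) (-2) 0
    norm_num at this
    exact this
  have hq3 : volume (closedBall (pt 1 (-1)) (Real.sqrt 2 - 1) ∩ cell (-1) (-1))
      = volume (closedBall (pt 1 1) (Real.sqrt 2 - 1) ∩ cell (-1) 1) := by
    have := vol_cb_cell_shift 1 1 (Real.sqrt 2 - 1) (-1) (-1) 0 (-2)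
    norm_num at this
    exact this
  have hq4 : volume (closedBall (pt (-1) (-1)) (Real.sqrt 2 - 1) ∩ cell (-1) (-1))
      = volume (closedBall (pt 1 1) (Real.sqrt 2 - 1) ∩ cell 1 1) := by
    have := vol_cb_cell_shift 1 1 (Real.sqrt 2 - 1) (-1) (-1) (-2) (-2)
    norm_num at this
    exact this
  rw [hq2, hq3, hq4]
  have hfour := vol_cb_four_cells (α := 1) (β := 1) (r := Real.sqrt 2 - 1) (u := -1) (w := -1)
    r_nonneg ?_
  · norm_num at hfour
    calc ENNReal.ofReal π + (0 + (0 + (0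
          + (volume (closedBall (pt 1 1) (Real.sqrt 2 - 1) ∩ cell (-1) (-1))
          + (volume (closedBall (pt 1 1) (Real.sqrt 2 - 1) ∩ cell 1 (-1))
          + (volume (closedBall (pt 1 1) (Real.sqrt 2 - 1) ∩ cell (-1) 1)
          + volume (closedBall (pt 1 1) (Real.sqrt 2 - 1) ∩ cell 1 1)))))))
        = (volume (closedBall (pt 1 1) (Real.sqrt 2 - 1) ∩ cell (-1) (-1))
          + volume (closedBall (pt 1 1) (Real.sqrt 2 - 1) ∩ cell 1 (-1))
          + volume (closedBall (pt 1 1) (Real.sqrt 2 - 1) ∩ cell (-1) 1)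
          + volume (closedBall (pt 1 1) (Real.sqrt 2 - 1) ∩ cell 1 1))
          + ENNReal.ofReal π := by ring
      _ = ENNReal.ofReal (π * (Real.sqrt 2 - 1) ^ 2) + ENNReal.ofReal π := by rw [hfour]
      _ = ENNReal.ofReal (π * (4 - 2 * Real.sqrt 2)) := by
          rw [← ENNReal.ofReal_add (by positivity) (by positivity), ← pi4_eq]
          ring_nf
  · intro x hx
    have h0 := abs_le.mp (coord0_le hx)
    have h1 := abs_le.mp (coord1_le hx)
    have hs2 := sqrt2_lt_two
    simp only [Set.mem_union, cell, Set.mem_setOf_eq]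
    norm_num
    rcases lt_or_ge (x 0) 1 with hx0 | hx0 <;> rcases lt_or_ge (x 1) 1 with hx1 | hx1
    · exact Or.inl (Or.inl (Or.inl ⟨⟨by linarith, by linarith⟩, by linarith, by linarith⟩))
    · exact Or.inl (Or.inr ⟨⟨by linarith, by linarith⟩, by linarith, by linarith⟩)
    · exact Or.inl (Or.inl (Or.inr ⟨⟨by linarith, by linarith⟩, by linarith, by linarith⟩))
    · exact Or.inr ⟨⟨by linarith, by linarith⟩, by linarith, by linarith⟩
-- Stage 6: box decomposition
lemma exists_cell_idx {k : ℕ} {t : ℝ} (h1 : -(k:ℝ) ≤ t) (h2 : t < k) :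
    ∃ j : Fin k, -(k:ℝ) + 2*((j:ℕ):ℝ) ≤ t ∧ t < -(k:ℝ) + 2*((j:ℕ):ℝ) + 2 := by
  have h0 : (0:ℝ) ≤ (t + k)/2 := by linarith
  set m := ⌊(t + (k:ℝ))/2⌋ with hm
  have hm0 : 0 ≤ m := Int.floor_nonneg.mpr h0
  have hmk : m < k := by
    apply Int.floor_lt.mpr
    push_cast
    linarith
  have hle := Int.floor_le ((t + (k:ℝ))/2)
  have hlt := Int.lt_floor_add_one ((t + (k:ℝ))/2)
  rw [← hm] at hle hlt
  have hnat : m.toNat < k := by omega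
  have hcast : ((m.toNat : ℕ) : ℝ) = (m : ℝ) := by
    exact_mod_cast Int.toNat_of_nonneg hm0
  refine ⟨⟨m.toNat, hnat⟩, ?_, ?_⟩
  · simp only [hcast]
    have : (m:ℝ) ≤ (t + k)/2 := hle
    linarith
  · simp only [hcast]
    have : (t + k)/2 < (m:ℝ) + 1 := hlt
    linarith

def cellIdx (k : ℕ) (j : Fin k × Fin k) : Set (EuclideanSpace ℝ (Fin 2)) :=
  cell (-(k:ℝ) + 2*((j.1:ℕ):ℝ)) (-(k:ℝ) + 2*((j.2:ℕ):ℝ))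

lemma HB_decomp (k : ℕ) :
    {x : EuclideanSpace ℝ (Fin 2) | (-(k:ℝ) ≤ x 0 ∧ x 0 < k) ∧ (-(k:ℝ) ≤ x 1 ∧ x 1 < k)}
      = ⋃ j : Fin k × Fin k, cellIdx k j := by
  ext x
  simp only [Set.mem_setOf_eq, Set.mem_iUnion]
  constructor
  · rintro ⟨⟨h1, h2⟩, h3, h4⟩
    obtain ⟨j1, hj1⟩ := exists_cell_idx h1 h2
    obtain ⟨j2, hj2⟩ := exists_cell_idx h3 h4
    exact ⟨(j1, j2), ⟨⟨hj1.1, hj1.2⟩, ⟨hj2.1, hj2.2⟩⟩⟩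
  · rintro ⟨j, ⟨h1, h2⟩, h3, h4⟩
    have b1 : ((j.1:ℕ):ℝ) + 1 ≤ k := by exact_mod_cast j.1.isLt
    have b2 : ((j.2:ℕ):ℝ) + 1 ≤ k := by exact_mod_cast j.2.isLt
    have c1 : (0:ℝ) ≤ ((j.1:ℕ):ℝ) := Nat.cast_nonneg _
    have c2 : (0:ℝ) ≤ ((j.2:ℕ):ℝ) := Nat.cast_nonneg _
    exact ⟨⟨by linarith, by linarith⟩, by linarith, by linarith⟩

lemma cellIdx_vol (k : ℕ) (j : Fin k × Fin k) :
    volume (cellIdx k j ∩ P4S) = ENNReal.ofReal (π * (4 - 2 * Real.sqrt 2)) := by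
  rcases Nat.even_or_odd k with ⟨l, hl⟩ | ⟨l, hl⟩
  · have e1 : -(k:ℝ) + 2*((j.1:ℕ):ℝ) = 0 + 2*((((j.1:ℕ):ℤ) - l : ℤ):ℝ) := by
      push_cast [hl]; ring
    have e2 : -(k:ℝ) + 2*((j.2:ℕ):ℝ) = 0 + 2*((((j.2:ℕ):ℤ) - l : ℤ):ℝ) := by
      push_cast [hl]; ring
    rw [cellIdx, e1, e2, vol_cell_shift, cell00_vol]
  · have e1 : -(k:ℝ) + 2*((j.1:ℕ):ℝ) = -1 + 2*((((j.1:ℕ):ℤ) - l : ℤ):ℝ) := by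
      push_cast [hl]; ring
    have e2 : -(k:ℝ) + 2*((j.2:ℕ):ℝ) = -1 + 2*((((j.2:ℕ):ℤ) - l : ℤ):ℝ) := by
      push_cast [hl]; ring
    rw [cellIdx, e1, e2, vol_cell_shift, cellm1_vol]

lemma cellIdx_disjoint (k : ℕ) : Pairwise (Function.onFun Disjoint
    fun j : Fin k × Fin k => cellIdx k j ∩ P4S) := by
  intro j j' hne
  have hd : Disjoint (cellIdx k j) (cellIdx k j') := by
    have : j.1 ≠ j'.1 ∨ j.2 ≠ j'.2 := by
      by_contra h
      push_neg at h
      exact hne (Prod.ext h.1 h.2)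
    rcases this with h | h
    · rcases lt_or_gt_of_ne (fun hv => h (Fin.ext hv) : (j.1:ℕ) ≠ (j'.1:ℕ)) with hlt | hlt
      · apply cell_disjoint_h
        have : ((j.1:ℕ):ℝ) + 1 ≤ ((j'.1:ℕ):ℝ) := by exact_mod_cast hlt
        linarith
      · apply (cell_disjoint_h _).symm
        have : ((j'.1:ℕ):ℝ) + 1 ≤ ((j.1:ℕ):ℝ) := by exact_mod_cast hlt
        linarith
    · rcases lt_or_gt_of_ne (fun hv => h (Fin.ext hv) : (j.2:ℕ) ≠ (j'.2:ℕ)) with hlt | hlt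
      · apply cell_disjoint_v
        have : ((j.2:ℕ):ℝ) + 1 ≤ ((j'.2:ℕ):ℝ) := by exact_mod_cast hlt
        linarith
      · apply (cell_disjoint_v _).symm
        have : ((j'.2:ℕ):ℝ) + 1 ≤ ((j.2:ℕ):ℝ) := by exact_mod_cast hlt
        linarith
  exact hd.mono Set.inter_subset_left Set.inter_subset_left

lemma vol_HB (k : ℕ) :
    volume ({x : EuclideanSpace ℝ (Fin 2) |
        (-(k:ℝ) ≤ x 0 ∧ x 0 < k) ∧ (-(k:ℝ) ≤ x 1 ∧ x 1 < k)} ∩ P4S)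
      = (k:ENNReal)^2 * ENNReal.ofReal (π * (4 - 2 * Real.sqrt 2)) := by
  rw [HB_decomp, Set.iUnion_inter]
  rw [measure_iUnion (cellIdx_disjoint k)
    (fun j => ((cell_measurable _ _).inter P4S_meas))]
  rw [tsum_congr (fun j => cellIdx_vol k j), tsum_fintype]
  rw [Finset.sum_const, Finset.card_univ, Fintype.card_prod, Fintype.card_fin]
  rw [nsmul_eq_mul]
  congr 1
  push_cast
  ring

lemma vol_box_inter (k : ℕ) :
    volume ({x : EuclideanSpace ℝ (Fin 2) | ∀ i, |x i| ≤ (k:ℝ)} ∩ P4S)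
      = (k:ENNReal)^2 * ENNReal.ofReal (π * (4 - 2 * Real.sqrt 2)) := by
  rw [← vol_HB k]
  apply le_antisymm
  · calc volume ({x : EuclideanSpace ℝ (Fin 2) | ∀ i, |x i| ≤ (k:ℝ)} ∩ P4S)
        ≤ volume (({x : EuclideanSpace ℝ (Fin 2) |
            (-(k:ℝ) ≤ x 0 ∧ x 0 < k) ∧ (-(k:ℝ) ≤ x 1 ∧ x 1 < k)} ∩ P4S)
            ∪ ({x : EuclideanSpace ℝ (Fin 2) | x 0 = (k:ℝ)}
              ∪ {x : EuclideanSpace ℝ (Fin 2) | x 1 = (k:ℝ)})) := by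
          apply measure_mono
          rintro x ⟨hx, hS⟩
          have h0 := abs_le.mp (hx 0)
          have h1 := abs_le.mp (hx 1)
          by_cases e0 : x 0 = (k:ℝ)
          · exact Or.inr (Or.inl e0)
          by_cases e1 : x 1 = (k:ℝ)
          · exact Or.inr (Or.inr e1)
          · exact Or.inl ⟨⟨⟨h0.1, lt_of_le_of_ne h0.2 e0⟩, h1.1, lt_of_le_of_ne h1.2 e1⟩, hS⟩
      _ ≤ volume ({x : EuclideanSpace ℝ (Fin 2) |
            (-(k:ℝ) ≤ x 0 ∧ x 0 < k) ∧ (-(k:ℝ) ≤ x 1 ∧ x 1 < k)} ∩ P4S) := by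
          apply le_of_le_of_eq (measure_union_le _ _)
          rw [measure_union_null (hyperplane_null 0 (k:ℝ)) (hyperplane_null 1 (k:ℝ)), add_zero]
  · apply measure_mono
    apply Set.inter_subset_inter_left
    rintro x ⟨⟨h1, h2⟩, h3, h4⟩
    intro i
    have hi : i = 0 ∨ i = 1 := by omega
    rcases hi with rfl | rfl
    · exact abs_le.mpr ⟨h1, le_of_lt h2⟩
    · exact abs_le.mpr ⟨h3, le_of_lt h4⟩

lemma vol_box (k : ℕ) :
    volume {x : EuclideanSpace ℝ (Fin 2) | ∀ i, |x i| ≤ (k:ℝ)}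
      = ENNReal.ofReal (2*(k:ℝ)) * ENNReal.ofReal (2*(k:ℝ)) := by
  have hbox : {x : EuclideanSpace ℝ (Fin 2) | ∀ i, |x i| ≤ (k:ℝ)}
      = (MeasurableEquiv.toLp 2 (Fin 2 → ℝ)).symm ⁻¹'
        (Set.univ.pi fun _ : Fin 2 => Set.Icc (-(k:ℝ)) (k:ℝ)) := by
    ext x
    rw [Set.mem_preimage, Set.mem_univ_pi]
    simp only [Set.mem_setOf_eq, Set.mem_Icc, abs_le]
    rfl
  rw [hbox, (EuclideanSpace.volume_preserving_symm_measurableEquiv_toLp (Fin 2)).measure_preimage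
    (MeasurableSet.univ_pi fun _ => measurableSet_Icc).nullMeasurableSet]
  rw [volume_pi_pi, Fin.prod_univ_two, Real.volume_Icc]
  norm_num
  rw [show (k:ℝ) + (k:ℝ) = 2*(k:ℝ) by ring]
  rw [ENNReal.ofReal_mul (by norm_num), ENNReal.ofReal_ofNat, ENNReal.ofReal_natCast]

theorem P4_is_packing_with_density :
    (Pairwise fun i j =>
      Disjoint (interior (closedBall (P4center i) (P4radius i)))
        (interior (closedBall (P4center j) (P4radius j)))) ∧
    Filter.atTop.limsup (fun k : ℕ =>
      volume ({x : EuclideanSpace ℝ (Fin 2) | ∀ i, |x i| ≤ (k : ℝ)} ∩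
        ⋃ i, closedBall (P4center i) (P4radius i)) /
      volume {x : EuclideanSpace ℝ (Fin 2) | ∀ i, |x i| ≤ (k : ℝ)}) =
    ENNReal.ofReal (π * (2 - Real.sqrt 2) / 2) := by
  refine ⟨P4_packing, ?_⟩
  have hS : (⋃ i, closedBall (P4center i) (P4radius i)) = P4S := rfl
  have hev : ∀ k : ℕ, 1 ≤ k →
      volume ({x : EuclideanSpace ℝ (Fin 2) | ∀ i, |x i| ≤ (k : ℝ)} ∩
        ⋃ i, closedBall (P4center i) (P4radius i)) /
      volume {x : EuclideanSpace ℝ (Fin 2) | ∀ i, |x i| ≤ (k : ℝ)}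
      = ENNReal.ofReal (π * (2 - Real.sqrt 2) / 2) := by
    intro k hk
    rw [hS, vol_box_inter k, vol_box k]
    have hk0 : (0:ℝ) < (k:ℝ) := by exact_mod_cast hk
    have hkne : (k:ℝ) ≠ 0 := hk0.ne'
    rw [show ((k:ENNReal))^2 = ENNReal.ofReal ((k:ℝ)^2) by
      rw [ENNReal.ofReal_pow hk0.le, ENNReal.ofReal_natCast]]
    rw [← ENNReal.ofReal_mul (by positivity)]
    rw [← ENNReal.ofReal_mul (by positivity)]
    rw [← ENNReal.ofReal_div_of_pos (by positivity)]
    congr 1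
    field_simp
    ring
  rw [Filter.limsup_congr (eventually_atTop.mpr ⟨1, hev⟩), Filter.limsup_const]
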